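/- For any real constant Q, in every pure Nash equilibrium ((z, z_0, z_1, …, z_k), (w, w_0)) of the game, Player Z's strategy satisfies z_0 = 1. (If z_0 = 0, then Player W's payoff Π_W = (1 − z_0)·w_0 = w_0 is unbounded above over X_W since w_0 ranges over all reals, so Player W has no best response.) -/
import Mathlib


open MeasureTheory

noncomputable section

/-- Player Z's strategy set `X_Z`: tuples `(z, z₀, (z₁,…,z_k))` with
`R ≤ z ≤ R + 2^r − 1`, each `zᵢ ∈ {0,1}`, and `(1/2)·z₀ + Σᵢ qᵢ·zᵢ ≤ z`. -/
def inXZ (k : ℕ) (q : Fin k → ℕ) (R r : ℕ) (s : ℤ × ℤ × (Fin k → ℤ)) : Prop :=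
  (R : ℤ) ≤ s.1 ∧ s.1 ≤ (R : ℤ) + 2 ^ r - 1 ∧
  (s.2.1 = 0 ∨ s.2.1 = 1) ∧ (∀ i, s.2.2 i = 0 ∨ s.2.2 i = 1) ∧
  (1 / 2 : ℝ) * (s.2.1 : ℝ) + ∑ i, (q i : ℝ) * (s.2.2 i : ℝ) ≤ (s.1 : ℝ)

/-- Player W's strategy set `X_W`: pairs `(w, w₀)` with `R ≤ w ≤ R + 2^r − 1`,
`w` an integer and `w₀` an arbitrary real number. -/
def inXW (R r : ℕ) (t : ℤ × ℝ) : Prop :=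
  (R : ℤ) ≤ t.1 ∧ t.1 ≤ (R : ℤ) + 2 ^ r - 1

/-- Player Z's payoff `Π_Z = (1/2)·z₀ + Σᵢ qᵢ·zᵢ + Q·z·(2w − z)`. -/
def payZ (k : ℕ) (q : Fin k → ℕ) (Q : ℝ) (s : ℤ × ℤ × (Fin k → ℤ)) (t : ℤ × ℝ) : ℝ :=
  (1 / 2 : ℝ) * (s.2.1 : ℝ) + ∑ i, (q i : ℝ) * (s.2.2 i : ℝ)
    + Q * (s.1 : ℝ) * (2 * (t.1 : ℝ) - (s.1 : ℝ))

/-- Player W's payoff `Π_W = (1 − z₀)·w₀`. -/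
def payW (k : ℕ) (s : ℤ × ℤ × (Fin k → ℤ)) (t : ℤ × ℝ) : ℝ :=
  (1 - (s.2.1 : ℝ)) * t.2

/-- A pure Nash equilibrium: each player's strategy is feasible and maximizes
that player's payoff over their own strategy set, the other strategy held fixed. -/
def pureNE (k : ℕ) (q : Fin k → ℕ) (R r : ℕ) (Q : ℝ)
    (s : ℤ × ℤ × (Fin k → ℤ)) (t : ℤ × ℝ) : Prop :=
  inXZ k q R r s ∧ inXW R r t ∧
  (∀ s' : ℤ × ℤ × (Fin k → ℤ), inXZ k q R r s' → payZ k q Q s' t ≤ payZ k q Q s t) ∧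
  (∀ t' : ℤ × ℝ, inXW R r t' → payW k s t' ≤ payW k s t)

/-- for any real `Q`, in every pure Nash equilibrium Player Z's
strategy satisfies `z₀ = 1`. -/
theorem stmt3 (k : ℕ) (q : Fin k → ℕ) (R r : ℕ) (Q : ℝ)
    (hq : ∀ i, 0 < q i) (hR : 0 < R) (hr : 0 < r) (hrk : r ≤ k)
    (s : ℤ × ℤ × (Fin k → ℤ)) (t : ℤ × ℝ)
    (hNE : pureNE k q R r Q s t) :
    s.2.1 = 1 := by
  obtain ⟨hZ, hW, _, hWbest⟩ := hNE
  rcases hZ.2.2.1 with h0 | h1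
  · exfalso
    have := hWbest (t.1, t.2 + 1) hW
    simp [payW, h0] at this
    linarith
  · exact h1
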